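/- Let g : ℝ → ℂ be of bounded variation and for N ∈ ℕ define G_N : ℤ → ℂ by G_N(n) = 2^N ∫_{(n−1/2)/2^N}^{(n+1/2)/2^N} g(t) dt. Then Var_ℤ(G_N) ≤ Var_ℝ(g). -/

import Mathlib

open MeasureTheory

/-- Total variation over ℝ. -/
noncomputable def varR (g : ℝ → ℂ) : ENNReal :=
  ⨆ φ : {φ : ℤ → ℝ // Monotone φ},
    ∑' m : ℤ, ENNReal.ofReal ‖g (φ.1 (m + 1)) - g (φ.1 m)‖

/-- Total variation over ℤ. -/
noncomputable def varZ (G : ℤ → ℂ) : ENNReal :=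
  ∑' n : ℤ, ENNReal.ofReal ‖G (n + 1) - G n‖

theorem stmt14 (g : ℝ → ℂ) (hmeas : Measurable g) (hBV : varR g ≠ ⊤)
    (N : ℕ) (G : ℤ → ℂ)
    (hG : ∀ n : ℤ, G n =
      (2 ^ N : ℝ) • ∫ t in (((n : ℝ) - 1/2) / 2 ^ N)..(((n : ℝ) + 1/2) / 2 ^ N), g t) :
    varZ G ≤ varR g := by
  set c : ℝ := 2 ^ N with hcdef
  have hcpos : (0:ℝ) < c := by positivity
  have hc0 : c ≠ 0 := ne_of_gt hcpos
  -- any single increment is at most varR g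
  have hb : ∀ x y : ℝ, x ≤ y → ENNReal.ofReal ‖g y - g x‖ ≤ varR g := by
    intro x y hxy
    set φ : ℤ → ℝ := fun m => if m ≤ 0 then x else y with hφ
    have hmono : Monotone φ := by
      intro a b hab
      by_cases ha : a ≤ 0 <;> by_cases hb : b ≤ 0 <;>
        simp only [hφ, ha, hb, if_true, if_false, le_refl] <;> first
          | exact hxy | omega
    have h0 : ENNReal.ofReal ‖g (φ (0 + 1)) - g (φ 0)‖ ≤
        ∑' m : ℤ, ENNReal.ofReal ‖g (φ (m + 1)) - g (φ m)‖ := ENNReal.le_tsum 0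
    have h1 : (∑' m : ℤ, ENNReal.ofReal ‖g (φ (m + 1)) - g (φ m)‖) ≤ varR g :=
      le_iSup (fun ψ : {ψ : ℤ → ℝ // Monotone ψ} =>
        ∑' m : ℤ, ENNReal.ofReal ‖g (ψ.1 (m + 1)) - g (ψ.1 m)‖) ⟨φ, hmono⟩
    have : φ (0 + 1) = y := by norm_num [hφ]
    have h00 : φ 0 = x := by norm_num [hφ]
    rw [this, h00] at h0
    exact h0.trans h1
  -- boundedness of g
  set C : ℝ := ‖g 0‖ + (varR g).toReal with hCdef
  have hbound : ∀ x : ℝ, ‖g x‖ ≤ C := by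
    intro x
    have key : ‖g x - g 0‖ ≤ (varR g).toReal := by
      rcases le_or_gt 0 x with h | h
      · exact (ENNReal.ofReal_le_iff_le_toReal hBV).mp (hb 0 x h)
      · rw [norm_sub_rev]
        exact (ENNReal.ofReal_le_iff_le_toReal hBV).mp (hb x 0 h.le)
    calc ‖g x‖ = ‖g 0 + (g x - g 0)‖ := by ring_nf
      _ ≤ ‖g 0‖ + ‖g x - g 0‖ := norm_add_le _ _
      _ ≤ C := by rw [hCdef]; linarith
  -- interval integrability of bounded measurable functions
  have hii : ∀ (u : ℝ → ℂ), Measurable u → (∀ x, ‖u x‖ ≤ C) →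
      ∀ a b : ℝ, IntervalIntegrable u volume a b := by
    intro u hu hC a b
    exact IntervalIntegrable.mono_fun' (g := fun _ => C) intervalIntegrable_const
      hu.aestronglyMeasurable (Filter.Eventually.of_forall hC)
  -- rewrite G n as an average
  have hGint : ∀ n : ℤ, G n = ∫ t in (-(1:ℝ)/2)..(1/2), g ((t + n) / c) := by
    intro n
    have key := intervalIntegral.integral_comp_div_add (a := -(1:ℝ)/2) (b := (1:ℝ)/2)
      g hc0 ((n : ℝ) / c)
    have e1 : ((n:ℝ) - 1/2)/c = -(1:ℝ)/2/c + (n:ℝ)/c := by ring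
    have e2 : ((n:ℝ) + 1/2)/c = (1:ℝ)/2/c + (n:ℝ)/c := by ring
    rw [hG n, e1, e2, ← key]
    exact intervalIntegral.integral_congr (fun t _ => by rw [add_div])
  -- the difference as a single integral
  have hdiff : ∀ n : ℤ, G (n + 1) - G n =
      ∫ t in (-(1:ℝ)/2)..(1/2), (g ((t + ((n:ℝ) + 1)) / c) - g ((t + n) / c)) := by
    intro n
    rw [hGint (n + 1), hGint n, ← intervalIntegral.integral_sub]
    · apply intervalIntegral.integral_congr
      intro t _
      push_cast
      ring_nf
    · exact hii _ (hmeas.comp (by fun_prop)) (fun t => hbound _) _ _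
    · exact hii _ (hmeas.comp (by fun_prop)) (fun t => hbound _) _ _
  -- pointwise bound by a lintegral
  have step1 : ∀ n : ℤ, ENNReal.ofReal ‖G (n + 1) - G n‖ ≤
      ∫⁻ t in Set.Ioc (-(1:ℝ)/2) (1/2),
        (‖g ((t + ((n:ℝ) + 1)) / c) - g ((t + n) / c)‖₊ : ENNReal) := by
    intro n
    rw [hdiff n, intervalIntegral.integral_of_le (by norm_num), ofReal_norm]
    exact enorm_integral_le_lintegral_enorm _
  have hmF : ∀ n : ℤ, Measurable
      (fun t : ℝ => (‖g ((t + ((n:ℝ) + 1)) / c) - g ((t + n) / c)‖₊ : ENNReal)) := by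
    intro n
    exact ((hmeas.comp (by fun_prop)).sub (hmeas.comp (by fun_prop))).enorm
  calc varZ G ≤ ∑' n : ℤ, ∫⁻ t in Set.Ioc (-(1:ℝ)/2) (1/2),
        (‖g ((t + ((n:ℝ) + 1)) / c) - g ((t + n) / c)‖₊ : ENNReal) :=
      ENNReal.tsum_le_tsum step1
    _ = ∫⁻ t in Set.Ioc (-(1:ℝ)/2) (1/2), ∑' n : ℤ,
        (‖g ((t + ((n:ℝ) + 1)) / c) - g ((t + n) / c)‖₊ : ENNReal) :=
      (lintegral_tsum (fun n => (hmF n).aemeasurable)).symm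
    _ ≤ ∫⁻ _ in Set.Ioc (-(1:ℝ)/2) (1/2), varR g := by
      refine lintegral_mono fun t => ?_
      have hmono : Monotone (fun m : ℤ => (t + m) / c) := by
        intro a b hab
        have h' : (a : ℝ) ≤ b := by exact_mod_cast hab
        exact (div_le_div_iff_of_pos_right hcpos).mpr (by linarith)
      have hle : (∑' m : ℤ, ENNReal.ofReal ‖g ((t + ((m:ℤ) + 1 : ℤ)) / c) - g ((t + m) / c)‖)
          ≤ varR g :=
        le_iSup (fun ψ : {ψ : ℤ → ℝ // Monotone ψ} =>
          ∑' m : ℤ, ENNReal.ofReal ‖g (ψ.1 (m + 1)) - g (ψ.1 m)‖)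
          ⟨fun m : ℤ => (t + m) / c, hmono⟩
      refine le_trans (le_of_eq ?_) hle
      apply tsum_congr
      intro m
      rw [← enorm_eq_nnnorm, ← ofReal_norm]
      push_cast
      ring_nf
    _ = varR g := by
      rw [setLIntegral_const, Real.volume_Ioc]
      norm_num
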